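/- If M_x = 2^ℓ and M_r = 2^(ℓ+t), then under additive statistical blinding (X valued in {0,...,M_x}, R uniform on {0,...,M_r}, Y = X + R), the mutual information satisfies I(X;Y) ≤ 2^{-t}. -/

import Mathlib

open MeasureTheory Real Finset

noncomputable section

/-- Independence of two finite-valued random variables, stated via the product rule. -/
def Indep2 {Ω α β : Type*} [MeasurableSpace Ω] (μ : Measure Ω) (X : Ω → α) (R : Ω → β) : Prop :=
  ∀ a b, μ {ω | X ω = a ∧ R ω = b} = μ {ω | X ω = a} * μ {ω | R ω = b}

/-- `X` is uniformly distributed on the (finite) type `α`. -/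
def UniformOn {Ω α : Type*} [Fintype α] [MeasurableSpace Ω] (μ : Measure Ω) (X : Ω → α) : Prop :=
  ∀ a, μ {ω | X ω = a} = (Fintype.card α : ENNReal)⁻¹

/-- Shannon entropy (natural log) of a random variable valued in a finite type. -/
def entropy {Ω α : Type*} [Fintype α] [MeasurableSpace Ω] (μ : Measure Ω) (X : Ω → α) : ℝ :=
  ∑ a, Real.negMulLog (μ {ω | X ω = a}).toReal

/-- Shannon entropy (natural log) of a finitely-supported random variable on a finite space. -/
def entropyF {Ω α : Type*} [Fintype Ω] [DecidableEq α] [MeasurableSpace Ω] (μ : Measure Ω)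
    (X : Ω → α) : ℝ :=
  ∑ a ∈ Finset.image X Finset.univ, Real.negMulLog (μ {ω | X ω = a}).toReal


lemma entropyF_eq_sum {Ω α : Type*} [Fintype Ω] [DecidableEq α] [MeasurableSpace Ω]
    (μ : Measure Ω) (Z : Ω → α) (S : Finset α) (h : ∀ a ∉ S, μ {ω | Z ω = a} = 0) :
    entropyF μ Z = ∑ a ∈ S, Real.negMulLog (μ {ω | Z ω = a}).toReal := by
  classical
  have h1 : entropyF μ Z = ∑ a ∈ S ∪ Finset.image Z Finset.univ,
      Real.negMulLog (μ {ω | Z ω = a}).toReal := by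
    refine Finset.sum_subset Finset.subset_union_right (fun a _ ha => ?_)
    have : {ω | Z ω = a} = ∅ := by
      ext ω; simp only [Set.mem_setOf_eq, Set.mem_empty_iff_false, iff_false]
      intro hz
      exact ha (Finset.mem_image.2 ⟨ω, Finset.mem_univ ω, hz⟩)
    simp [this]
  rw [h1]
  refine (Finset.sum_subset Finset.subset_union_left (fun a _ ha => ?_)).symm
  rw [h a ha]; simp


/-- Statistical blinding: with `Mx = 2^ℓ` and `Mr = 2^(ℓ+t)`, the mutual information
between `X` and `Y = X + R` is at most `2^(-t)`. -/
theorem stmt7 {Ω : Type*} [Fintype Ω] [MeasurableSpace Ω] (μ : Measure Ω)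
    [IsProbabilityMeasure μ] {ℓ t Mx Mr : ℕ} (hMx : Mx = 2 ^ ℓ) (hMr : Mr = 2 ^ (ℓ + t))
    (X R : Ω → ℕ) (hX : ∀ ω, X ω ≤ Mx)
    (hR : ∀ r : ℕ, μ {ω | R ω = r} = if r ≤ Mr then ((Mr : ENNReal) + 1)⁻¹ else 0)
    (hInd : Indep2 μ X R) :
    entropyF μ (fun ω => X ω + R ω)
        - (entropyF μ (fun ω => (X ω, X ω + R ω)) - entropyF μ X)
      ≤ ((2 : ℝ) ^ t)⁻¹ := by
  classical
  set A : Finset ℕ := Finset.range (Mx + 1) with hA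
  set B : Finset ℕ := Finset.range (Mx + Mr + 1) with hB
  set c : ℝ := ((Mr : ℝ) + 1)⁻¹ with hc
  set p : ℕ → ℝ := fun x => (μ {ω | X ω = x}).toReal with hp
  set q : ℕ → ℝ := fun y => (μ {ω | X ω + R ω = y}).toReal with hq
  have hMrpos : (0:ℝ) < (Mr : ℝ) + 1 := by positivity
  have hcpos : (0:ℝ) < c := by positivity
  have hcEN : (((Mr : ENNReal) + 1)⁻¹).toReal = c := by
    rw [hc, ENNReal.toReal_inv, ENNReal.toReal_add (by simp) (by simp), ENNReal.toReal_one,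
      ENNReal.toReal_natCast]
  -- joint measure formula
  have hjoint : ∀ x y : ℕ, μ {ω | X ω = x ∧ X ω + R ω = y}
      = μ {ω | X ω = x} * (if x ≤ y ∧ y ≤ x + Mr then ((Mr : ENNReal) + 1)⁻¹ else 0) := by
    intro x y
    by_cases hxy : x ≤ y
    · have hset : {ω | X ω = x ∧ X ω + R ω = y} = {ω | X ω = x ∧ R ω = y - x} := by
        ext ω; constructor
        · rintro ⟨h1, h2⟩; exact ⟨h1, by omega⟩
        · rintro ⟨h1, h2⟩; exact ⟨h1, by omega⟩
      rw [hset, hInd x (y - x), hR (y - x)]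
      congr 1
      by_cases hd : y - x ≤ Mr
      · rw [if_pos hd, if_pos ⟨hxy, by omega⟩]
      · rw [if_neg hd, if_neg (by omega)]
    · have hset : {ω | X ω = x ∧ X ω + R ω = y} = ∅ := by
        ext ω; simp only [Set.mem_setOf_eq, Set.mem_empty_iff_false, iff_false]
        rintro ⟨h1, h2⟩; omega
      rw [hset, if_neg (by omega), mul_zero, measure_empty]
  have hjointR : ∀ x y : ℕ, (μ {ω | X ω = x ∧ X ω + R ω = y}).toReal
      = p x * (if x ≤ y ∧ y ≤ x + Mr then c else 0) := by
    intro x y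
    rw [hjoint x y, ENNReal.toReal_mul]
    congr 1
    by_cases h : x ≤ y ∧ y ≤ x + Mr
    · rw [if_pos h, if_pos h, hcEN]
    · rw [if_neg h, if_neg h]; simp
  have hXzero : ∀ x : ℕ, x ∉ A → μ {ω | X ω = x} = 0 := by
    intro x hx
    have : {ω | X ω = x} = ∅ := by
      ext ω; simp only [Set.mem_setOf_eq, Set.mem_empty_iff_false, iff_false]
      intro h; apply hx; rw [hA, Finset.mem_range]; have := hX ω; omega
    simp [this]
  have hYsub : ∀ y : ℕ, μ {ω | X ω + R ω = y} ≤ ∑ x ∈ A, μ {ω | X ω = x ∧ X ω + R ω = y} := by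
    intro y
    refine le_trans (measure_mono ?_) (measure_biUnion_finset_le A _)
    intro ω hω
    simp only [Set.mem_iUnion]
    exact ⟨X ω, by rw [hA, Finset.mem_range]; have := hX ω; omega, rfl, hω⟩
  have hYzero : ∀ y : ℕ, Mx + Mr < y → μ {ω | X ω + R ω = y} = 0 := by
    intro y hy
    refine le_antisymm (le_trans (hYsub y) (le_of_eq ?_)) zero_le
    refine Finset.sum_eq_zero (fun x hx => ?_)
    rw [hjoint x y, if_neg (by rw [hA, Finset.mem_range] at hx; omega), mul_zero]
  -- entropies as explicit sums
  have hEX : entropyF μ X = ∑ x ∈ A, Real.negMulLog (p x) :=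
    entropyF_eq_sum μ X A hXzero
  have hEY : entropyF μ (fun ω => X ω + R ω) = ∑ y ∈ B, Real.negMulLog (q y) := by
    refine entropyF_eq_sum μ _ B (fun y hy => ?_)
    exact hYzero y (by rw [hB, Finset.mem_range] at hy; omega)
  have hpairset : ∀ a : ℕ × ℕ,
      {ω | (X ω, X ω + R ω) = a} = {ω | X ω = a.1 ∧ X ω + R ω = a.2} := by
    intro a; ext ω; simp [Prod.ext_iff]
  have hEpair : entropyF μ (fun ω => (X ω, X ω + R ω))
      = ∑ x ∈ A, ∑ y ∈ B, Real.negMulLog ((μ {ω | X ω = x ∧ X ω + R ω = y}).toReal) := by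
    have hz : ∀ a ∉ A ×ˢ B, μ {ω | (X ω, X ω + R ω) = a} = 0 := by
      intro a ha
      rw [hpairset a, hjoint]
      by_cases h1 : a.1 ∈ A
      · have h2 : a.2 ∉ B := fun h2 => ha (Finset.mem_product.2 ⟨h1, h2⟩)
        rw [hA, Finset.mem_range] at h1
        rw [hB, Finset.mem_range] at h2
        rw [if_neg (by omega), mul_zero]
      · rw [hXzero a.1 h1, zero_mul]
    rw [entropyF_eq_sum μ _ (A ×ˢ B) hz, Finset.sum_product]
    refine Finset.sum_congr rfl (fun x _ => Finset.sum_congr rfl (fun y _ => ?_))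
    rw [hpairset (x, y)]
  -- constant-on-interval sums
  have hinner : ∀ x ∈ A, ∀ K : ℝ,
      (∑ y ∈ B, (if x ≤ y ∧ y ≤ x + Mr then K else 0)) = ((Mr : ℝ) + 1) * K := by
    intro x hx K
    rw [hA, Finset.mem_range] at hx
    rw [← Finset.sum_filter]
    have hfil : B.filter (fun y => x ≤ y ∧ y ≤ x + Mr) = Finset.Icc x (x + Mr) := by
      ext y
      simp only [Finset.mem_filter, Finset.mem_Icc, hB, Finset.mem_range]
      omega
    rw [hfil, Finset.sum_const, Nat.card_Icc]
    have : x + Mr + 1 - x = Mr + 1 := by omega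
    rw [this, nsmul_eq_mul]
    push_cast; ring
  have hMc : ((Mr : ℝ) + 1) * c = 1 := by rw [hc, mul_inv_cancel₀ (ne_of_gt hMrpos)]
  set L : ℝ := Real.log ((Mr : ℝ) + 1) with hL
  have hLnn : 0 ≤ L := Real.log_nonneg (by push_cast; linarith)
  have hnmlc : ((Mr : ℝ) + 1) * Real.negMulLog c = L := by
    rw [Real.negMulLog, hc, Real.log_inv]
    field_simp
    exact hL.symm
  set s : ℝ := ∑ x ∈ A, p x with hs
  set Q : ℝ := ∑ y ∈ B, q y with hQ
  -- joint entropy value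
  have hpair_val : entropyF μ (fun ω => (X ω, X ω + R ω))
      = (∑ x ∈ A, Real.negMulLog (p x)) + s * L := by
    have hxterm : ∀ x ∈ A, (∑ y ∈ B, Real.negMulLog ((μ {ω | X ω = x ∧ X ω + R ω = y}).toReal))
        = Real.negMulLog (p x) + p x * L := by
      intro x hx
      have hstep : ∀ y ∈ B, Real.negMulLog ((μ {ω | X ω = x ∧ X ω + R ω = y}).toReal)
          = (if x ≤ y ∧ y ≤ x + Mr then Real.negMulLog (p x * c) else 0) := by
        intro y _
        rw [hjointR x y]
        by_cases h : x ≤ y ∧ y ≤ x + Mr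
        · rw [if_pos h, if_pos h]
        · rw [if_neg h, if_neg h, mul_zero, Real.negMulLog_zero]
      rw [Finset.sum_congr rfl hstep, hinner x hx, Real.negMulLog_mul, mul_add,
        show ((Mr:ℝ)+1) * (c * Real.negMulLog (p x))
          = (((Mr:ℝ)+1) * c) * Real.negMulLog (p x) by ring, hMc, one_mul,
        show ((Mr:ℝ)+1) * (p x * Real.negMulLog c)
          = p x * (((Mr:ℝ)+1) * Real.negMulLog c) by ring, hnmlc]
    rw [hEpair, Finset.sum_congr rfl hxterm, Finset.sum_add_distrib, ← Finset.sum_mul]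
  -- sum bounds
  have hsum_ne_top : ∀ (S : Finset ℕ) (f : ℕ → Set Ω), (∑ x ∈ S, μ (f x)) ≠ ⊤ := by
    intro S f
    refine (ENNReal.sum_lt_top.2 fun x _ => measure_lt_top μ (f x)).ne
  have hs1 : 1 ≤ s := by
    have hcover : (Set.univ : Set Ω) ⊆ ⋃ x ∈ A, {ω | X ω = x} := by
      intro ω _
      simp only [Set.mem_iUnion]
      exact ⟨X ω, by rw [hA, Finset.mem_range]; have := hX ω; omega, rfl⟩
    have h1 : (1 : ENNReal) ≤ ∑ x ∈ A, μ {ω | X ω = x} := by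
      calc (1:ENNReal) = μ Set.univ := (measure_univ).symm
      _ ≤ μ (⋃ x ∈ A, {ω | X ω = x}) := measure_mono hcover
      _ ≤ ∑ x ∈ A, μ {ω | X ω = x} := measure_biUnion_finset_le A _
    have := ENNReal.toReal_mono (hsum_ne_top A _) h1
    rwa [ENNReal.toReal_one, ENNReal.toReal_sum (fun x _ => (measure_lt_top μ _).ne)] at this
  have hQ1 : 1 ≤ Q := by
    set C : Finset ℕ := B ∪ Finset.image (fun ω => X ω + R ω) Finset.univ with hC
    have hcover : (Set.univ : Set Ω) ⊆ ⋃ y ∈ C, {ω | X ω + R ω = y} := by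
      intro ω _
      simp only [Set.mem_iUnion]
      refine ⟨X ω + R ω, ?_, rfl⟩
      exact Finset.mem_union_right _ (Finset.mem_image.2 ⟨ω, Finset.mem_univ ω, rfl⟩)
    have h1 : (1 : ENNReal) ≤ ∑ y ∈ C, μ {ω | X ω + R ω = y} := by
      calc (1:ENNReal) = μ Set.univ := (measure_univ).symm
      _ ≤ μ (⋃ y ∈ C, {ω | X ω + R ω = y}) := measure_mono hcover
      _ ≤ ∑ y ∈ C, μ {ω | X ω + R ω = y} := measure_biUnion_finset_le C _
    have h2 : (∑ y ∈ C, μ {ω | X ω + R ω = y}) = ∑ y ∈ B, μ {ω | X ω + R ω = y} := by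
      refine (Finset.sum_subset Finset.subset_union_left (fun y _ hy => ?_)).symm
      exact hYzero y (by rw [hB, Finset.mem_range] at hy; omega)
    rw [h2] at h1
    have := ENNReal.toReal_mono (hsum_ne_top B _) h1
    rwa [ENNReal.toReal_one, ENNReal.toReal_sum (fun y _ => (measure_lt_top μ _).ne)] at this
  have hQs : Q ≤ s := by
    have hy_le : ∀ y : ℕ, q y ≤ ∑ x ∈ A, (μ {ω | X ω = x ∧ X ω + R ω = y}).toReal := by
      intro y
      have := ENNReal.toReal_mono (hsum_ne_top A _) (hYsub y)
      rwa [ENNReal.toReal_sum (fun x _ => (measure_lt_top μ _).ne)] at this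
    calc Q ≤ ∑ y ∈ B, ∑ x ∈ A, (μ {ω | X ω = x ∧ X ω + R ω = y}).toReal :=
          Finset.sum_le_sum (fun y _ => hy_le y)
    _ = ∑ x ∈ A, ∑ y ∈ B, (μ {ω | X ω = x ∧ X ω + R ω = y}).toReal := Finset.sum_comm
    _ = s := by
        refine Finset.sum_congr rfl (fun x hx => ?_)
        have hstep : ∀ y ∈ B, (μ {ω | X ω = x ∧ X ω + R ω = y}).toReal
            = (if x ≤ y ∧ y ≤ x + Mr then p x * c else 0) := by
          intro y _
          rw [hjointR x y]
          by_cases h : x ≤ y ∧ y ≤ x + Mr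
          · rw [if_pos h, if_pos h]
          · rw [if_neg h, if_neg h, mul_zero]
        rw [Finset.sum_congr rfl hstep, hinner x hx]
        rw [show ((Mr:ℝ)+1) * (p x * c) = p x * (((Mr:ℝ)+1) * c) by ring, hMc, mul_one]
  have hQpos : 0 < Q := lt_of_lt_of_le one_pos hQ1
  -- Jensen bound on H(Y)
  set n : ℝ := ((Mx : ℝ) + (Mr : ℝ) + 1) with hn
  have hnpos : (0:ℝ) < n := by positivity
  have hJ : (∑ y ∈ B, Real.negMulLog (q y)) ≤ Q * Real.log n - Q * Real.log Q := by
    have hcard : (B.card : ℝ) = n := by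
      rw [hB, Finset.card_range]; push_cast; ring
    have hw1 : ∑ _y ∈ B, n⁻¹ = 1 := by
      rw [Finset.sum_const, nsmul_eq_mul, hcard]
      field_simp
    have hjen := Real.concaveOn_negMulLog.le_map_sum (t := B) (w := fun _ => n⁻¹)
      (p := q) (fun y _ => by positivity) hw1 (fun y _ => ENNReal.toReal_nonneg)
    simp only [smul_eq_mul] at hjen
    have hlhs : (∑ y ∈ B, n⁻¹ * Real.negMulLog (q y))
        = n⁻¹ * ∑ y ∈ B, Real.negMulLog (q y) := by rw [Finset.mul_sum]
    have hrhs : (∑ y ∈ B, n⁻¹ * q y) = n⁻¹ * Q := by rw [hQ, Finset.mul_sum]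
    rw [hlhs, hrhs] at hjen
    have h2 := mul_le_mul_of_nonneg_left hjen (le_of_lt hnpos)
    rw [← mul_assoc, mul_inv_cancel₀ (ne_of_gt hnpos), one_mul] at h2
    refine h2.trans (le_of_eq ?_)
    rw [Real.negMulLog, Real.log_mul (by positivity) (ne_of_gt hQpos), Real.log_inv]
    field_simp
    ring
  -- final arithmetic
  set ε : ℝ := (Mx : ℝ) / ((Mr : ℝ) + 1) with hε
  have hεnn : 0 ≤ ε := by positivity
  have hε1 : ε ≤ 1 := by
    rw [hε, div_le_one hMrpos]
    have : (Mx:ℝ) ≤ (Mr:ℝ) := by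
      have : Mx ≤ Mr := by rw [hMx, hMr]; exact Nat.pow_le_pow_right (by norm_num) (by omega)
      exact_mod_cast this
    linarith
  have hεt : ε ≤ ((2:ℝ) ^ t)⁻¹ := by
    rw [hε, div_le_iff₀ hMrpos]
    have h2t : (0:ℝ) < (2:ℝ)^t := by positivity
    rw [inv_mul_eq_div, le_div_iff₀ h2t]
    have : (Mx:ℝ) * 2^t = (Mr:ℝ) := by
      rw [hMx, hMr]; push_cast; rw [pow_add]
    rw [this]; linarith
  have hlogn : Real.log n - L ≤ ε := by
    have hdiv : n / ((Mr:ℝ) + 1) - 1 = ε := by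
      rw [hε, hn]; field_simp
      ring
    have h1 : Real.log n - L = Real.log (n / ((Mr:ℝ)+1)) := by
      rw [hL, Real.log_div (ne_of_gt hnpos) (ne_of_gt hMrpos)]
    rw [h1]
    have := Real.log_le_sub_one_of_pos (show (0:ℝ) < n / ((Mr:ℝ)+1) by positivity)
    linarith
  have hQlog : Q - 1 ≤ Q * Real.log Q := by
    have h1 := Real.one_sub_inv_le_log_of_pos hQpos
    have h2 := mul_le_mul_of_nonneg_left h1 (le_of_lt hQpos)
    have h3 : Q * (1 - Q⁻¹) = Q - 1 := by
      field_simp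
    linarith [h2, h3.symm.le]
  -- assemble
  rw [hEY, hpair_val, hEX]
  have hfin : Q * Real.log n - Q * Real.log Q - s * L ≤ ((2:ℝ)^t)⁻¹ := by
    nlinarith [mul_nonneg (sub_nonneg.2 hQs) hLnn,
      mul_nonneg (le_of_lt hQpos) (sub_nonneg.2 hlogn),
      mul_nonneg (sub_nonneg.2 hQ1) (sub_nonneg.2 hε1)]
  linarith [hJ]
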